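/- arXiv:1003.4885 — 3 statements merged into one kernel-verified Lean document; each statement's English description precedes it below -/
import Mathlib

section
/- Let ε_1,…,ε_n be i.i.d. centered Gaussian random variables with variance σ² > 0, let x_{i,j} (1 ≤ i ≤ n, 1 ≤ j ≤ p) be real numbers with n^{-1}·Σ_{i=1}^n x_{i,j}² ≤ 1 for every j, and set V_j = n^{-1}·Σ_{i=1}^n x_{i,j}·ε_i. Let η ∈ (0,1), let 0 < τ ≤ 1, and let λ_n = (2√2/τ)·σ·√(log(p/η)/n). Then P(max_{j=1,…,p} 2|V_j| ≤ τ·λ_n) ≥ 1 − η. -/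
section GaussAux
open MeasureTheory ProbabilityTheory Real Set
open scoped ENNReal NNReal

noncomputable section

lemma tail_int {b : ℝ} (hb : 0 < b) {a : ℝ} (ha : 0 ≤ a) :
    ∫ x in Ioi a, Real.exp (-b * x ^ 2) ≤ Real.sqrt (π / b) / 2 * Real.exp (-b * a ^ 2) := by
  have hint : Integrable (fun x : ℝ => Real.exp (-b * x ^ 2)) := integrable_exp_neg_mul_sq hb
  have h1 : ∫ x in Ioi a, Real.exp (-b * x ^ 2)
      ≤ ∫ x in Ioi a, Real.exp (-b * a ^ 2) * Real.exp (-b * (x - a) ^ 2) := by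
    refine setIntegral_mono_on hint.integrableOn
      (((hint.comp_sub_right a).const_mul _).integrableOn) measurableSet_Ioi ?_
    intro x hx
    rw [← Real.exp_add, Real.exp_le_exp]
    have hxa : 0 ≤ x - a := sub_nonneg.mpr (le_of_lt (Set.mem_Ioi.mp hx))
    nlinarith [mul_nonneg (mul_nonneg hb.le ha) hxa]
  have h2 : ∫ x in Ioi a, Real.exp (-b * (x - a) ^ 2)
      = ∫ x in Ioi (0:ℝ), Real.exp (-b * x ^ 2) := by
    rw [← integral_indicator measurableSet_Ioi, ← integral_indicator measurableSet_Ioi]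
    have : ∀ x : ℝ, (Ioi a).indicator (fun x => Real.exp (-b * (x - a) ^ 2)) x
        = (Ioi (0:ℝ)).indicator (fun x => Real.exp (-b * x ^ 2)) (x - a) := by
      intro x
      simp only [Set.indicator_apply, Set.mem_Ioi, sub_pos]
    simp_rw [this]
    exact integral_sub_right_eq_self ((Ioi (0:ℝ)).indicator fun x => Real.exp (-b * x ^ 2)) a
  calc ∫ x in Ioi a, Real.exp (-b * x ^ 2)
      ≤ ∫ x in Ioi a, Real.exp (-b * a ^ 2) * Real.exp (-b * (x - a) ^ 2) := h1
    _ = Real.exp (-b * a ^ 2) * ∫ x in Ioi a, Real.exp (-b * (x - a) ^ 2) := by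
        rw [integral_const_mul]
    _ = Real.exp (-b * a ^ 2) * (Real.sqrt (π / b) / 2) := by rw [h2, integral_gaussian_Ioi]
    _ = Real.sqrt (π / b) / 2 * Real.exp (-b * a ^ 2) := by ring

lemma gauss_tail_Ici {v : ℝ≥0} (hv : v ≠ 0) {a : ℝ} (ha : 0 ≤ a) :
    gaussianReal 0 v {x | a ≤ x} ≤ ENNReal.ofReal (1 / 2 * Real.exp (-(a ^ 2 / (2 * v)))) := by
  have hv' : (0:ℝ) < v := lt_of_le_of_ne v.coe_nonneg (by exact_mod_cast (Ne.symm hv))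
  rw [gaussianReal_apply_eq_integral 0 hv]
  apply ENNReal.ofReal_le_ofReal
  have hset : {x : ℝ | a ≤ x} = Ici a := rfl
  rw [hset]
  have hb : (0:ℝ) < (2 * v)⁻¹ := by positivity
  have hpdf : ∀ x : ℝ, gaussianPDFReal 0 v x
      = (Real.sqrt (2 * π * v))⁻¹ * Real.exp (-(2 * (v:ℝ))⁻¹ * x ^ 2) := by
    intro x
    rw [gaussianPDFReal]
    congr 1
    rw [Real.exp_eq_exp]
    field_simp
    ring
  calc ∫ x in Ici a, gaussianPDFReal 0 v x
      = (Real.sqrt (2 * π * v))⁻¹ * ∫ x in Ioi a, Real.exp (-(2 * (v:ℝ))⁻¹ * x ^ 2) := by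
        simp_rw [hpdf]
        rw [integral_const_mul, integral_Ici_eq_integral_Ioi]
    _ ≤ (Real.sqrt (2 * π * v))⁻¹ * (Real.sqrt (π / (2 * (v:ℝ))⁻¹) / 2
          * Real.exp (-(2 * (v:ℝ))⁻¹ * a ^ 2)) := by
        refine mul_le_mul_of_nonneg_left (tail_int hb ha) (by positivity)
    _ = 1 / 2 * Real.exp (-(a ^ 2 / (2 * v))) := by
        have h1 : π / (2 * (v:ℝ))⁻¹ = 2 * π * v := by field_simp
        rw [h1]
        have h2 : Real.sqrt (2 * π * v) ≠ 0 := by positivity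
        have h3 : -(2 * (v:ℝ))⁻¹ * a ^ 2 = -(a ^ 2 / (2 * v)) := by field_simp
        rw [h3]
        field_simp

lemma gauss_tail_abs {v : ℝ≥0} (hv : v ≠ 0) {a : ℝ} (ha : 0 ≤ a) :
    gaussianReal 0 v {x | a < |x|} ≤ ENNReal.ofReal (Real.exp (-(a ^ 2 / (2 * v)))) := by
  have hsub : {x : ℝ | a < |x|} ⊆ {x : ℝ | a ≤ x} ∪ {x : ℝ | x ≤ -a} := by
    intro x hx
    simp only [Set.mem_setOf_eq] at hx
    rcases le_abs.mp hx.le with h | h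
    · exact Or.inl h
    · exact Or.inr (by simp only [Set.mem_setOf_eq]; linarith)
  have hneg : gaussianReal 0 v {x : ℝ | x ≤ -a} = gaussianReal 0 v {x : ℝ | a ≤ x} := by
    have hmap := gaussianReal_map_const_mul (μ := 0) (v := v) (-1 : ℝ)
    have h1 : (.mk ((-1:ℝ)^2) (sq_nonneg _) : ℝ≥0) = 1 := by
      ext; norm_num
    rw [h1, one_mul, mul_zero] at hmap
    conv_lhs => rw [← hmap]
    rw [Measure.map_apply (measurable_const_mul _) (by
      have : {x : ℝ | x ≤ -a} = Iic (-a) := rfl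
      rw [this]; exact measurableSet_Iic)]
    congr 1
    ext y
    simp only [Set.mem_preimage, Set.mem_setOf_eq]
    constructor <;> intro h <;> linarith
  calc gaussianReal 0 v {x : ℝ | a < |x|}
      ≤ gaussianReal 0 v ({x : ℝ | a ≤ x} ∪ {x : ℝ | x ≤ -a}) := measure_mono hsub
    _ ≤ gaussianReal 0 v {x : ℝ | a ≤ x} + gaussianReal 0 v {x : ℝ | x ≤ -a} :=
        measure_union_le _ _
    _ ≤ ENNReal.ofReal (1 / 2 * Real.exp (-(a ^ 2 / (2 * v))))
        + ENNReal.ofReal (1 / 2 * Real.exp (-(a ^ 2 / (2 * v)))) := by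
        rw [hneg]
        exact add_le_add (gauss_tail_Ici hv ha) (gauss_tail_Ici hv ha)
    _ = ENNReal.ofReal (Real.exp (-(a ^ 2 / (2 * v)))) := by
        rw [← ENNReal.ofReal_add (by positivity) (by positivity)]
        congr 1
        ring

lemma gauss_key (v w : ℝ≥0) (hv : v ≠ 0) (hw : w ≠ 0) (y : ℝ) :
    ∫ x : ℝ, gaussianPDFReal 0 v x * gaussianPDFReal 0 w (y - x)
      = gaussianPDFReal 0 (v + w) y := by
  have hv' : (0:ℝ) < v := lt_of_le_of_ne v.coe_nonneg (by exact_mod_cast (Ne.symm hv))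
  have hw' : (0:ℝ) < w := lt_of_le_of_ne w.coe_nonneg (by exact_mod_cast (Ne.symm hw))
  have hα : 0 < ((v:ℝ) + w) / (2 * v * w) := by positivity
  have h1 : ∀ c1 c2 e1 e2 : ℝ,
      (c1 * Real.exp e1) * (c2 * Real.exp e2) = (c1 * c2) * Real.exp (e1 + e2) := by
    intros; rw [Real.exp_add]; ring
  have hexp : ∀ x : ℝ, gaussianPDFReal 0 v x * gaussianPDFReal 0 w (y - x)
      = ((Real.sqrt (2 * π * v))⁻¹ * (Real.sqrt (2 * π * w))⁻¹
          * Real.exp (-(y ^ 2 / (2 * ((v:ℝ) + w)))))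
        * Real.exp (-(((v:ℝ) + w) / (2 * v * w)) * (x - (v:ℝ) * y / ((v:ℝ) + w)) ^ 2) := by
    intro x
    simp only [gaussianPDFReal, sub_zero]
    rw [h1]
    conv_rhs => rw [mul_assoc, ← Real.exp_add]
    congr 1
    rw [Real.exp_eq_exp]
    field_simp
    ring
  simp_rw [hexp]
  rw [integral_const_mul,
    integral_sub_right_eq_self
      (fun x => Real.exp (-(((v:ℝ) + w) / (2 * v * w)) * x ^ 2)) ((v:ℝ) * y / ((v:ℝ) + w)),
    integral_gaussian]
  simp only [gaussianPDFReal, sub_zero]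
  have hc : (Real.sqrt (2 * π * v))⁻¹ * (Real.sqrt (2 * π * w))⁻¹
        * Real.sqrt (π / (((v:ℝ) + w) / (2 * v * w)))
      = (Real.sqrt (2 * π * ((v:ℝ) + w)))⁻¹ := by
    rw [← Real.sqrt_inv, ← Real.sqrt_inv, ← Real.sqrt_mul (by positivity),
      ← Real.sqrt_mul (by positivity), ← Real.sqrt_inv]
    congr 1
    field_simp
  have hcoe : ((v + w : ℝ≥0) : ℝ) = (v:ℝ) + w := by push_cast; ring
  rw [hcoe]
  rw [show ∀ a b c d : ℝ, a * b * c * d = a * b * d * c by intros; ring, hc]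
  rw [neg_div]

lemma gauss_conv (v w : ℝ≥0) :
    Measure.map (fun p : ℝ × ℝ => p.1 + p.2) ((gaussianReal 0 v).prod (gaussianReal 0 w))
      = gaussianReal 0 (v + w) := by
  by_cases hv : v = 0
  · subst hv
    rw [gaussianReal_zero_var, Measure.dirac_prod,
      Measure.map_map measurable_add measurable_prodMk_left]
    simp only [Function.comp_def, zero_add]
    rw [show (fun x : ℝ => x) = id from rfl, Measure.map_id]
  by_cases hw : w = 0
  · subst hw
    rw [gaussianReal_zero_var, Measure.prod_dirac,
      Measure.map_map measurable_add measurable_prodMk_right]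
    simp only [Function.comp_def, add_zero]
    rw [show (fun x : ℝ => x) = id from rfl, Measure.map_id]
  -- main case
  have hvw : v + w ≠ 0 := fun h => hv (by simpa using (add_eq_zero.mp h).1)
  have hint : ∀ y : ℝ, Integrable (fun x => gaussianPDFReal 0 v x * gaussianPDFReal 0 w (y - x)) := by
    intro y
    refine Integrable.mono ((integrable_gaussianPDFReal 0 v).const_mul
      ((Real.sqrt (2 * π * w))⁻¹)) ?_ ?_
    · exact ((measurable_gaussianPDFReal 0 v).mul
        ((measurable_gaussianPDFReal 0 w).comp (measurable_const.sub measurable_id))).aestronglyMeasurable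
    · refine Filter.Eventually.of_forall fun x => ?_
      simp only [Real.norm_eq_abs]
      rw [abs_of_nonneg (mul_nonneg (gaussianPDFReal_nonneg 0 v x) (gaussianPDFReal_nonneg 0 w _)),
        abs_of_nonneg (mul_nonneg (by positivity) (gaussianPDFReal_nonneg 0 v x))]
      rw [mul_comm ((Real.sqrt (2 * π * (w:ℝ)))⁻¹) _]
      refine mul_le_mul_of_nonneg_left ?_ (gaussianPDFReal_nonneg 0 v x)
      rw [gaussianPDFReal]
      nth_rewrite 2 [← mul_one ((Real.sqrt (2 * π * (w:ℝ)))⁻¹)]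
      refine mul_le_mul_of_nonneg_left ?_ (by positivity)
      rw [← Real.exp_zero]
      apply Real.exp_le_exp.mpr
      have hw' : (0:ℝ) < w := lt_of_le_of_ne w.coe_nonneg (by exact_mod_cast (Ne.symm hw))
      apply div_nonpos_of_nonpos_of_nonneg <;> nlinarith [sq_nonneg (y - x - 0)]
  refine Measure.ext fun s hs => ?_
  rw [Measure.map_apply measurable_add hs,
    Measure.prod_apply (measurable_add hs)]
  have hinner : ∀ x : ℝ, gaussianReal 0 w (Prod.mk x ⁻¹' ((fun p : ℝ × ℝ => p.1 + p.2) ⁻¹' s))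
      = ∫⁻ y, ENNReal.ofReal (gaussianPDFReal 0 w (y - x)) * s.indicator 1 y := by
    intro x
    rw [gaussianReal_apply 0 hw]
    have hmeas : MeasurableSet {y : ℝ | x + y ∈ s} :=
      hs.preimage (measurable_const.add measurable_id)
    have hset : (Prod.mk x ⁻¹' ((fun p : ℝ × ℝ => p.1 + p.2) ⁻¹' s)) = {y | x + y ∈ s} := rfl
    rw [hset, ← lintegral_indicator hmeas]
    have hrw : ∀ y : ℝ, ({y : ℝ | x + y ∈ s}).indicator (gaussianPDF 0 w) y
        = (fun z => ENNReal.ofReal (gaussianPDFReal 0 w (z - x)) * s.indicator 1 z) (x + y) := by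
      intro y
      simp only [Set.indicator_apply, Set.mem_setOf_eq, gaussianPDF, add_sub_cancel_left]
      by_cases hy : x + y ∈ s <;> simp [hy, gaussianPDF]
    simp_rw [hrw]
    exact lintegral_add_left_eq_self
      (fun z => ENNReal.ofReal (gaussianPDFReal 0 w (z - x)) * s.indicator 1 z) x
  simp_rw [hinner]
  have hG : Measurable (Function.uncurry fun x y : ℝ =>
      ENNReal.ofReal (gaussianPDFReal 0 w (y - x)) * s.indicator 1 y) := by
    exact (((measurable_gaussianPDFReal 0 w).comp
        (measurable_snd.sub measurable_fst)).ennreal_ofReal).mul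
      ((measurable_one.indicator hs).comp measurable_snd)
  rw [gaussianReal_of_var_ne_zero 0 hv,
    lintegral_withDensity_eq_lintegral_mul volume (measurable_gaussianPDF 0 v)
      (Measurable.lintegral_prod_right hG)]
  simp only [Pi.mul_apply]
  have hpull : ∀ x : ℝ, gaussianPDF 0 v x
        * ∫⁻ y, ENNReal.ofReal (gaussianPDFReal 0 w (y - x)) * s.indicator 1 y
      = ∫⁻ y, ENNReal.ofReal (gaussianPDFReal 0 v x)
          * (ENNReal.ofReal (gaussianPDFReal 0 w (y - x)) * s.indicator 1 y) := by
    intro x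
    rw [show gaussianPDF 0 v x = ENNReal.ofReal (gaussianPDFReal 0 v x) from rfl,
      ← lintegral_const_mul' _ _ ENNReal.ofReal_ne_top]
  simp_rw [hpull]
  rw [lintegral_lintegral_swap]
  swap
  · have : Measurable (Function.uncurry fun x y : ℝ =>
        ENNReal.ofReal (gaussianPDFReal 0 v x)
          * (ENNReal.ofReal (gaussianPDFReal 0 w (y - x)) * s.indicator 1 y)) := by
      exact (((measurable_gaussianPDFReal 0 v).comp measurable_fst).ennreal_ofReal).mul hG
    exact this.aemeasurable
  have hy : ∀ y : ℝ, ∫⁻ x, ENNReal.ofReal (gaussianPDFReal 0 v x)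
        * (ENNReal.ofReal (gaussianPDFReal 0 w (y - x)) * s.indicator 1 y)
      = Set.indicator s (gaussianPDF 0 (v + w)) y := by
    intro y
    have h1 : ∀ x : ℝ, ENNReal.ofReal (gaussianPDFReal 0 v x)
          * (ENNReal.ofReal (gaussianPDFReal 0 w (y - x)) * s.indicator 1 y)
        = ENNReal.ofReal (gaussianPDFReal 0 v x * gaussianPDFReal 0 w (y - x))
            * s.indicator 1 y := by
      intro x
      rw [← mul_assoc, ← ENNReal.ofReal_mul (gaussianPDFReal_nonneg 0 v x)]
    simp_rw [h1]
    have hfm : AEMeasurable (fun x : ℝ =>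
        ENNReal.ofReal (gaussianPDFReal 0 v x * gaussianPDFReal 0 w (y - x))) volume := by
      exact (((measurable_gaussianPDFReal 0 v).mul ((measurable_gaussianPDFReal 0 w).comp
        (measurable_const.sub measurable_id))).ennreal_ofReal).aemeasurable
    rw [lintegral_mul_const'' _ hfm]
    rw [← ofReal_integral_eq_lintegral_ofReal (hint y) (Filter.Eventually.of_forall fun x =>
      mul_nonneg (gaussianPDFReal_nonneg 0 v x) (gaussianPDFReal_nonneg 0 w _))]
    rw [gauss_key v w hv hw y]
    by_cases hys : y ∈ s <;> simp [hys, gaussianPDF]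
  simp_rw [hy]
  rw [lintegral_indicator hs, ← gaussianReal_apply 0 hvw]

lemma gauss_map_sum (V : ℝ≥0) : ∀ (n : ℕ) (c : Fin n → ℝ) (s : ℝ≥0),
    (s : ℝ) = (V : ℝ) * ∑ i, c i ^ 2 →
    Measure.map (fun ε : Fin n → ℝ => ∑ i, c i * ε i)
        (Measure.pi fun _ => gaussianReal 0 V)
      = gaussianReal 0 s := by
  intro n
  induction n with
  | zero =>
    intro c s hs
    have hs0 : s = 0 := by
      have : (s:ℝ) = 0 := by simpa using hs
      exact_mod_cast this
    subst hs0
    rw [gaussianReal_zero_var]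
    have : (fun ε : Fin 0 → ℝ => ∑ i, c i * ε i) = fun _ => (0:ℝ) := by
      funext ε; simp
    rw [this, Measure.map_const]
    simp
  | succ n ih =>
    intro c s hs
    set e := MeasurableEquiv.piFinSuccAbove (fun _ : Fin (n+1) => ℝ) 0 with he
    have hmp := measurePreserving_piFinSuccAbove (fun _ : Fin (n+1) => gaussianReal 0 V) 0
    have hcomp : (fun ε : Fin (n+1) → ℝ => ∑ i, c i * ε i)
        = (fun q : ℝ × (Fin n → ℝ) => c 0 * q.1 + ∑ j, c (Fin.succ j) * q.2 j) ∘ e := by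
      funext ε
      simp only [Function.comp_apply, he, MeasurableEquiv.piFinSuccAbove_apply]
      rw [Fin.sum_univ_succ]
      simp [Fin.insertNthEquiv, Fin.tail]
    have hmeas2 : Measurable fun δ : Fin n → ℝ => ∑ j, c (Fin.succ j) * δ j :=
      Finset.measurable_sum _ fun j _ => (measurable_pi_apply j).const_mul _
    have hmeasT : Measurable fun q : ℝ × (Fin n → ℝ) =>
        c 0 * q.1 + ∑ j, c (Fin.succ j) * q.2 j :=
      (measurable_fst.const_mul _).add (hmeas2.comp measurable_snd)
    rw [hcomp, ← Measure.map_map hmeasT e.measurable, hmp.map_eq]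
    have hsplit : (fun q : ℝ × (Fin n → ℝ) => c 0 * q.1 + ∑ j, c (Fin.succ j) * q.2 j)
        = (fun p : ℝ × ℝ => p.1 + p.2)
          ∘ (Prod.map (fun a : ℝ => c 0 * a) (fun δ : Fin n → ℝ => ∑ j, c (Fin.succ j) * δ j)) := by
      funext q; rfl
    rw [hsplit, ← Measure.map_map measurable_add ((measurable_const_mul _).prodMap hmeas2),
      ← Measure.map_prod_map _ _ (measurable_const_mul _) hmeas2]
    have h1 : Measure.map (fun a : ℝ => c 0 * a) (gaussianReal 0 V)
        = gaussianReal 0 (.mk (c 0 ^ 2) (sq_nonneg _) * V) := by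
      have := gaussianReal_map_const_mul (μ := 0) (v := V) (c 0)
      rwa [mul_zero] at this
    have h2 := ih (fun j => c (Fin.succ j)) (.mk ((V:ℝ) * ∑ j, c (Fin.succ j) ^ 2) (by positivity))
      (by simp)
    rw [h1, h2, gauss_conv]
    congr 1
    ext
    push_cast
    rw [hs, Fin.sum_univ_succ]
    ring

end
end GaussAux




open MeasureTheory ProbabilityTheory Matrix Finset
open scoped Classical BigOperators ENNReal NNReal

noncomputable section

/-- `‖a‖ₙ² = n⁻¹ ∑ᵢ aᵢ²`. -/
def normnSq {n : ℕ} (a : Fin n → ℝ) : ℝ := (∑ i, a i ^ 2) / n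

/-- `ℓ₁` norm on `ℝ^p`. -/
def l1norm {p : ℕ} (b : Fin p → ℝ) : ℝ := ∑ j, |b j|

/-- `ℓ₂` norm on `ℝ^p`. -/
def l2norm {p : ℕ} (b : Fin p → ℝ) : ℝ := Real.sqrt (∑ j, b j ^ 2)

/-- `ℓ∞` norm on `ℝ^p`. -/
def linfnorm {p : ℕ} (b : Fin p → ℝ) : ℝ := ⨆ j, |b j|

/-- The penalized least squares criterion
`‖Y − Xβ‖ₙ² + λ|β|₁ + μ·β'J'Jβ`. -/
def crit {n m p : ℕ} (X : Matrix (Fin n) (Fin p) ℝ) (Y : Fin n → ℝ)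
    (J : Matrix (Fin m) (Fin p) ℝ) (lam mu : ℝ) (β : Fin p → ℝ) : ℝ :=
  normnSq (Y - X.mulVec β) + lam * l1norm β + mu * (β ⬝ᵥ (Jᵀ * J).mulVec β)

/-- Sparsity set `A* = {j : βⱼ ≠ 0}`. -/
def spSupp {p : ℕ} (βs : Fin p → ℝ) : Finset (Fin p) :=
  Finset.univ.filter fun j => βs j ≠ 0

/-- Restriction `b_Θ` of a vector to a set of indices. -/
def restr {p : ℕ} (Θ : Finset (Fin p)) (b : Fin p → ℝ) : Fin p → ℝ :=
  fun j => if j ∈ Θ then b j else 0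

/-- Assumption B(Θ) (and B'): the cone constraint is over `Θcone` and the quadratic
lower bound concerns the coordinates in `Θmeas`. -/
def AssumptionB {p : ℕ} (K : Matrix (Fin p) (Fin p) ℝ) (Θcone Θmeas : Finset (Fin p))
    (ρ φ : ℝ) : Prop :=
  ∀ Δ : Fin p → ℝ,
    (∑ j ∈ Θconeᶜ, |Δ j|) ≤ ρ * Real.sqrt (∑ j ∈ Θcone, Δ j ^ 2) →
    φ * ∑ j ∈ Θmeas, Δ j ^ 2 ≤ Δ ⬝ᵥ K.mulVec Δ

/-- Restricted eigenvalue assumption for the matrix `K` over the set `A`. -/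
def AssumptionRE {p : ℕ} (K : Matrix (Fin p) (Fin p) ℝ) (A : Finset (Fin p)) (φ : ℝ) : Prop :=
  ∀ Δ : Fin p → ℝ,
    (∑ j ∈ Aᶜ, |Δ j|) ≤ 4 * ∑ j ∈ A, |Δ j| →
    φ * ∑ j ∈ A, Δ j ^ 2 ≤ Δ ⬝ᵥ K.mulVec Δ

/-- `C` is a set of `mt` indices outside `B` carrying the `mt` largest components of `δ`
(in absolute value) outside `B`. -/
def isTopSet {p : ℕ} (δ : Fin p → ℝ) (B : Finset (Fin p)) (mt : ℕ)
    (C : Finset (Fin p)) : Prop :=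
  C ⊆ Bᶜ ∧ C.card = mt ∧ ∀ k ∈ Bᶜ \ C, ∀ j ∈ C, |δ k| ≤ |δ j|

/-- The `n`-fold product of centered Gaussian measures with variance `σ²`:
the law of the i.i.d. noise vector `ε`. -/
def gaussP (n : ℕ) (σ : ℝ) : Measure (Fin n → ℝ) :=
  Measure.pi fun _ => gaussianReal 0 ⟨σ ^ 2, sq_nonneg σ⟩

/-- Gaussian concentration lemma. -/
theorem statement15
    (n p : ℕ) (hn : 0 < n) (hp : 0 < p)
    (σ : ℝ) (hσ : 0 < σ)
    (x : Matrix (Fin n) (Fin p) ℝ)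
    (hx : ∀ j, (∑ i, x i j ^ 2) / n ≤ 1)
    (η : ℝ) (hη : η ∈ Set.Ioo (0 : ℝ) 1)
    (τ : ℝ) (hτ : τ ∈ Set.Ioc (0 : ℝ) 1)
    (lamn : ℝ)
    (hlam : lamn = 2 * Real.sqrt 2 / τ * σ * Real.sqrt (Real.log ((p : ℝ) / η) / n)) :
    ENNReal.ofReal (1 - η) ≤
      gaussP n σ {ε | ∀ j, 2 * |(∑ i, x i j * ε i) / n| ≤ τ * lamn} := by
  have hn' : (0:ℝ) < n := Nat.cast_pos.mpr hn
  have hp' : (0:ℝ) < p := Nat.cast_pos.mpr hp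
  have hη0 := hη.1
  have hη1 := hη.2
  have hpη : (1:ℝ) < (p:ℝ) / η := by
    rw [lt_div_iff₀ hη0]
    have : (1:ℝ) ≤ p := by exact_mod_cast hp
    nlinarith
  set L : ℝ := Real.log ((p:ℝ) / η) with hL_def
  have hL : 0 < L := Real.log_pos hpη
  set a : ℝ := Real.sqrt 2 * σ * Real.sqrt (L / n) * n with ha_def
  have hsqLn : 0 < Real.sqrt (L / n) := Real.sqrt_pos.mpr (by positivity)
  have ha : 0 < a := by positivity
  -- equivalence of the event condition
  have hτlam : τ * lamn = 2 * (Real.sqrt 2 * σ * Real.sqrt (L / n)) := by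
    rw [hlam]
    have hτ0 : τ ≠ 0 := ne_of_gt hτ.1
    have hsn : Real.sqrt (n:ℝ) ≠ 0 := ne_of_gt (Real.sqrt_pos.mpr hn')
    field_simp
  have hiff : ∀ (r : ℝ), (2 * |r / n| ≤ τ * lamn) ↔ |r| ≤ a := by
    intro r
    rw [hτlam, abs_div, Nat.abs_cast,
      mul_le_mul_iff_right₀ (by norm_num : (0:ℝ) < 2), div_le_iff₀ hn', ha_def]
  -- measurability
  have hS : ∀ j, Measurable fun ε : Fin n → ℝ => ∑ i, x i j * ε i := fun j =>
    Finset.measurable_sum _ fun i _ => (measurable_pi_apply i).const_mul _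
  have hB : MeasurableSet {r : ℝ | a < |r|} :=
    measurableSet_lt measurable_const continuous_abs.measurable
  set A : Set (Fin n → ℝ) := {ε | ∀ j, 2 * |(∑ i, x i j * ε i) / n| ≤ τ * lamn} with hA_def
  have hAeq : A = ⋂ j, (fun ε : Fin n → ℝ => ∑ i, x i j * ε i) ⁻¹'
      {r : ℝ | 2 * |r / n| ≤ τ * lamn} := by
    ext ε
    simp [hA_def, Set.mem_iInter]
  have hAmeas : MeasurableSet A := by
    rw [hAeq]
    exact MeasurableSet.iInter fun j => (hS j)
      (measurableSet_le ((measurable_id.div_const _).abs.const_mul 2) measurable_const)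
  have hprob : IsProbabilityMeasure (gaussP n σ) := by
    unfold gaussP; exact Measure.pi.instIsProbabilityMeasure (μ := fun _ => gaussianReal 0 (NNReal.mk (σ ^ 2) (sq_nonneg σ)))
  -- tail bound per column
  have htail : ∀ j, gaussP n σ ((fun ε : Fin n → ℝ => ∑ i, x i j * ε i) ⁻¹' {r : ℝ | a < |r|})
      ≤ ENNReal.ofReal (η / p) := by
    intro j
    set sj : ℝ≥0 := ⟨σ ^ 2 * ∑ i, x i j ^ 2, by positivity⟩ with hsj_def
    have hmap : Measure.map (fun ε : Fin n → ℝ => ∑ i, x i j * ε i) (gaussP n σ)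
        = gaussianReal 0 sj := by
      apply gauss_map_sum ⟨σ ^ 2, sq_nonneg σ⟩ n (fun i => x i j) sj
      rfl
    rw [← Measure.map_apply (hS j) hB, hmap]
    by_cases hzero : sj = 0
    · rw [hzero, gaussianReal_zero_var, Measure.dirac_apply' 0 hB]
      simp only [Set.indicator_apply, Set.mem_setOf_eq, abs_zero]
      rw [if_neg (by linarith)]
      positivity
    · refine le_trans (gauss_tail_abs hzero ha.le) (ENNReal.ofReal_le_ofReal ?_)
      have hsj_pos : (0:ℝ) < sj := lt_of_le_of_ne sj.coe_nonneg (by exact_mod_cast (Ne.symm hzero))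
      have hsj_le : (sj:ℝ) ≤ σ ^ 2 * n := by
        have h1 : (∑ i, x i j ^ 2) ≤ n := by
          have := hx j
          rwa [div_le_one hn'] at this
        have : (sj:ℝ) = σ ^ 2 * ∑ i, x i j ^ 2 := rfl
        rw [this]
        nlinarith [sq_nonneg σ]
      have ha2 : a ^ 2 = 2 * σ ^ 2 * L * n := by
        rw [ha_def]
        rw [mul_pow, mul_pow, mul_pow, Real.sq_sqrt (by norm_num : (0:ℝ) ≤ 2),
          Real.sq_sqrt (by positivity : (0:ℝ) ≤ L / n)]
        field_simp
      have hexp_le : L ≤ a ^ 2 / (2 * sj) := by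
        rw [ha2, le_div_iff₀ (by positivity)]
        nlinarith
      have hfin : Real.exp (-(a ^ 2 / (2 * sj))) ≤ Real.exp (-L) := by
        apply Real.exp_le_exp.mpr
        linarith
      refine hfin.trans ?_
      rw [hL_def, Real.exp_neg, Real.exp_log (by positivity)]
      rw [inv_div]
  -- union bound
  have hcompl : gaussP n σ Aᶜ ≤ ENNReal.ofReal η := by
    have hsub : Aᶜ ⊆ ⋃ j, (fun ε : Fin n → ℝ => ∑ i, x i j * ε i) ⁻¹' {r : ℝ | a < |r|} := by
      intro ε hε
      simp only [hA_def, Set.mem_compl_iff, Set.mem_setOf_eq, not_forall] at hε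
      obtain ⟨j, hj⟩ := hε
      refine Set.mem_iUnion.mpr ⟨j, ?_⟩
      simp only [Set.mem_preimage, Set.mem_setOf_eq]
      by_contra hcon
      push_neg at hcon
      exact hj ((hiff _).mpr ((abs_le.mpr (abs_le.mp hcon)).trans (le_refl a)))
    calc gaussP n σ Aᶜ
        ≤ ∑' j : Fin p, gaussP n σ ((fun ε : Fin n → ℝ => ∑ i, x i j * ε i) ⁻¹' {r : ℝ | a < |r|}) :=
          le_trans (measure_mono hsub) (measure_iUnion_le _)
      _ = ∑ j : Fin p, gaussP n σ ((fun ε : Fin n → ℝ => ∑ i, x i j * ε i) ⁻¹' {r : ℝ | a < |r|}) :=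
          tsum_fintype _
      _ ≤ ∑ j : Fin p, ENNReal.ofReal (η / p) := Finset.sum_le_sum fun j _ => htail j
      _ = p * ENNReal.ofReal (η / p) := by
          rw [Finset.sum_const, Finset.card_univ, Fintype.card_fin, nsmul_eq_mul]
      _ = ENNReal.ofReal η := by
          rw [← ENNReal.ofReal_natCast p, ← ENNReal.ofReal_mul (by positivity)]
          congr 1
          field_simp
  calc ENNReal.ofReal (1 - η) = 1 - ENNReal.ofReal η := by
        rw [ENNReal.ofReal_sub _ hη0.le, ENNReal.ofReal_one]
    _ ≤ 1 - gaussP n σ Aᶜ := tsub_le_tsub_left hcompl 1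
    _ = gaussP n σ A := by rw [← prob_compl_eq_one_sub hAmeas.compl, compl_compl]
end
end

section
/- Let X be an n×p real matrix with columns X_j, β* ∈ ℝ^p, ε ∈ ℝ^n, and Y = Xβ* + ε. Let J be an m×p real matrix, J̃ = J'J, λ > 0, μ > 0, and let β̂ be any minimizer over β ∈ ℝ^p of ‖Y − Xβ‖_n² + λ|β|_1 + μ·β'J̃β. Set X̃ = [X ; √(nμ)·J], V_j = n^{-1}·Σ_{i=1}^n x_{i,j}·ε_i, and let B ⊆ {1,…,p} be any set with B ⊇ A* ∪ {j : (J̃β*)_j ≠ 0}, where A* = {j : β*_j ≠ 0}. If max_{j=1,…,p} 2|V_j| ≤ λ/2, then (1/n)·|X̃β* − X̃β̂|_2² + (λ/2)·|β* − β̂|_1 ≤ (2λ·√|A*| + 2μ·|J̃β*|_2)·|β*_B − β̂_B|_2. -/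
open MeasureTheory ProbabilityTheory Matrix Finset
open scoped Classical BigOperators ENNReal NNReal

noncomputable section

/-- deterministic basic inequality on the event
`max_j 2|V_j| ≤ λ/2`. -/
theorem statement17
    (n p m : ℕ) (hn : 0 < n)
    (X : Matrix (Fin n) (Fin p) ℝ) (βs : Fin p → ℝ) (εv : Fin n → ℝ)
    (J : Matrix (Fin m) (Fin p) ℝ)
    (Jt : Matrix (Fin p) (Fin p) ℝ) (hJt : Jt = Jᵀ * J)
    (lam mu : ℝ) (hlam : 0 < lam) (hmu : 0 < mu)
    (b : Fin p → ℝ)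
    (hb : ∀ β, crit X (X.mulVec βs + εv) J lam mu b ≤
               crit X (X.mulVec βs + εv) J lam mu β)
    (Xt : Matrix (Fin n ⊕ Fin m) (Fin p) ℝ)
    (hXt : Xt = Matrix.fromRows X (Real.sqrt (n * mu) • J))
    (B : Finset (Fin p))
    (hBsupp : spSupp βs ∪ (Finset.univ.filter fun j => Jt.mulVec βs j ≠ 0) ⊆ B)
    (hV : ∀ j, 2 * |(∑ i, X i j * εv i) / n| ≤ lam / 2) :
    (∑ i, ((Xt.mulVec βs - Xt.mulVec b) i) ^ 2) / n + lam / 2 * l1norm (βs - b) ≤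
      (2 * lam * Real.sqrt ((spSupp βs).card : ℝ) + 2 * mu * l2norm (Jt.mulVec βs)) *
        l2norm (restr B βs - restr B b) := by
  subst hJt hXt
  classical
  have hn' : (0:ℝ) < n := by exact_mod_cast hn
  set δ : Fin p → ℝ := βs - b with hδ
  set S1 : ℝ := ∑ i, (X.mulVec δ i)^2 with hS1
  set S2 : ℝ := ∑ i, (J.mulVec δ i)^2 with hS2def
  set T : ℝ := ∑ i, εv i * X.mulVec δ i with hT
  set G : Fin p → ℝ := (Jᵀ * J).mulVec βs with hG
  set A : Finset (Fin p) := spSupp βs with hA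
  set DB : ℝ := Real.sqrt (∑ j ∈ B, δ j ^ 2) with hDB
  have hDBnn : 0 ≤ DB := Real.sqrt_nonneg _
  have hAB : A ⊆ B := (Finset.union_subset_iff.mp hBsupp).1
  -- quadratic form identity
  have hquad : ∀ v w : Fin p → ℝ, v ⬝ᵥ (Jᵀ * J).mulVec w = J.mulVec v ⬝ᵥ J.mulVec w := by
    intro v w
    rw [← Matrix.mulVec_mulVec, dotProduct_mulVec, Matrix.vecMul_transpose]
  have hJδ : J.mulVec δ = J.mulVec βs - J.mulVec b := by
    rw [hδ, Matrix.mulVec_sub]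
  have key : ∀ (u w : Fin m → ℝ), (∑ i, (u i - w i)^2) = u ⬝ᵥ u - 2*(u ⬝ᵥ w) + w ⬝ᵥ w := by
    intro u w
    simp only [dotProduct, Finset.mul_sum, ← Finset.sum_sub_distrib,
      ← Finset.sum_add_distrib]
    exact Finset.sum_congr rfl fun i _ => by ring
  have hGd : G ⬝ᵥ δ = (J.mulVec βs) ⬝ᵥ (J.mulVec βs) - (J.mulVec βs) ⬝ᵥ (J.mulVec b) := by
    rw [hG, dotProduct_comm, hquad, hJδ, dotProduct_comm, dotProduct_sub]
  have E2 : b ⬝ᵥ (Jᵀ * J).mulVec b = βs ⬝ᵥ (Jᵀ * J).mulVec βs - 2*(G ⬝ᵥ δ) + S2 := by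
    have h1 := hquad b b
    have h2 := hquad βs βs
    have h3 : S2 = ∑ i, ((J.mulVec βs) i - (J.mulVec b) i)^2 := by
      rw [hS2def, hJδ]; rfl
    rw [h1, h2]
    rw [key] at h3
    linarith [h3, hGd]
  -- basic inequality
  have hYs : X.mulVec βs + εv - X.mulVec βs = εv := by funext i; simp
  have hYb : X.mulVec βs + εv - X.mulVec b = εv + X.mulVec δ := by
    funext i
    simp only [hδ, Matrix.mulVec_sub, Pi.add_apply, Pi.sub_apply]
    ring
  have hsum : ∑ i, (εv i + X.mulVec δ i)^2 = (∑ i, εv i^2) + (2*T + S1) := by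
    rw [hT, hS1, Finset.mul_sum, ← Finset.sum_add_distrib, ← Finset.sum_add_distrib]
    exact Finset.sum_congr rfl fun i _ => by ring
  have F1 : S1/n + mu * S2 ≤ lam * l1norm βs - lam * l1norm b - 2*T/n + 2*mu*(G ⬝ᵥ δ) := by
    have hcrit := hb βs
    unfold crit normnSq at hcrit
    rw [hYs, hYb] at hcrit
    simp only [Pi.add_apply] at hcrit
    rw [hsum, E2] at hcrit
    have hexp : mu * (βs ⬝ᵥ (Jᵀ * J).mulVec βs - 2*(G ⬝ᵥ δ) + S2)
        = mu * (βs ⬝ᵥ (Jᵀ * J).mulVec βs) - 2*mu*(G ⬝ᵥ δ) + mu * S2 := by ring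
    rw [hexp, add_div, add_div] at hcrit
    linarith
  -- cross term bound
  have hTswap : T = ∑ j, (∑ i, X i j * εv i) * δ j := by
    rw [hT]
    simp only [Matrix.mulVec, dotProduct, Finset.mul_sum, Finset.sum_mul]
    rw [Finset.sum_comm]
    exact Finset.sum_congr rfl fun j _ => Finset.sum_congr rfl fun i _ => by ring
  have F2 : -(2*T/n) ≤ lam/2 * l1norm δ := by
    have h0 : 2*T/n = ∑ j, 2 * ((∑ i, X i j * εv i)/n) * δ j := by
      rw [hTswap, Finset.mul_sum, Finset.sum_div]
      exact Finset.sum_congr rfl fun j _ => by ring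
    have h1 : -(2*T/n) = ∑ j, -(2 * ((∑ i, X i j * εv i)/n) * δ j) := by
      rw [h0, Finset.sum_neg_distrib]
    rw [h1]
    have h2 : lam/2 * l1norm δ = ∑ j, lam/2 * |δ j| := by
      rw [l1norm, Finset.mul_sum]
    rw [h2]
    apply Finset.sum_le_sum
    intro j _
    calc -(2 * ((∑ i, X i j * εv i)/n) * δ j) ≤ |2 * ((∑ i, X i j * εv i)/n) * δ j| :=
          neg_le_abs _
      _ = 2 * |(∑ i, X i j * εv i)/n| * |δ j| := by
          rw [abs_mul, abs_mul]; simp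
      _ ≤ lam/2 * |δ j| := mul_le_mul_of_nonneg_right (hV j) (abs_nonneg _)
  -- l1 bound
  have F3 : l1norm βs - l1norm b + l1norm δ ≤ 2 * ∑ j ∈ A, |δ j| := by
    have h1 : l1norm βs - l1norm b + l1norm δ = ∑ j, (|βs j| - |b j| + |δ j|) := by
      simp only [l1norm, ← Finset.sum_sub_distrib, ← Finset.sum_add_distrib]
    have h2 : 2 * ∑ j ∈ A, |δ j| = ∑ j, (if j ∈ A then 2 * |δ j| else 0) := by
      rw [Finset.sum_ite_mem, Finset.univ_inter, Finset.mul_sum]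
    rw [h1, h2]
    apply Finset.sum_le_sum
    intro j _
    by_cases hj : j ∈ A
    · simp only [hj, if_true]
      have h3 : |βs j| - |b j| ≤ |δ j| := by
        have := abs_sub_abs_le_abs_sub (βs j) (b j)
        simpa [hδ] using this
      linarith
    · simp only [hj, if_false]
      have hβ0 : βs j = 0 := by
        by_contra hc
        exact hj (by simp [hA, spSupp, hc])
      have h4 : δ j = - b j := by simp [hδ, hβ0]
      rw [hβ0, h4]
      simp
  -- Cauchy-Schwarz for l1 on A
  have F4 : (∑ j ∈ A, |δ j|) ≤ Real.sqrt (A.card : ℝ) * DB := by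
    have hCS := Finset.sum_mul_sq_le_sq_mul_sq A (fun _ => (1:ℝ)) (fun j => |δ j|)
    simp only [one_mul, one_pow, sq_abs] at hCS
    have hcard : (∑ _j ∈ A, (1:ℝ)) = (A.card : ℝ) := by simp
    rw [hcard] at hCS
    have hsub : (∑ j ∈ A, δ j ^ 2) ≤ ∑ j ∈ B, δ j ^ 2 :=
      Finset.sum_le_sum_of_subset_of_nonneg hAB (fun j _ _ => sq_nonneg _)
    calc (∑ j ∈ A, |δ j|) = Real.sqrt ((∑ j ∈ A, |δ j|)^2) := by
          rw [Real.sqrt_sq (Finset.sum_nonneg fun j _ => abs_nonneg _)]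
      _ ≤ Real.sqrt ((A.card : ℝ) * ∑ j ∈ A, δ j ^ 2) := Real.sqrt_le_sqrt hCS
      _ = Real.sqrt (A.card : ℝ) * Real.sqrt (∑ j ∈ A, δ j ^ 2) := by
          rw [Real.sqrt_mul (Nat.cast_nonneg _)]
      _ ≤ Real.sqrt (A.card : ℝ) * DB :=
          mul_le_mul_of_nonneg_left (Real.sqrt_le_sqrt hsub) (Real.sqrt_nonneg _)
  -- Cauchy-Schwarz for G ⬝ᵥ δ
  have hG0 : ∀ j ∉ B, G j = 0 := by
    intro j hj
    by_contra hc
    exact hj (hBsupp (Finset.mem_union_right _ (Finset.mem_filter.mpr ⟨Finset.mem_univ j, hc⟩)))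
  have F5 : G ⬝ᵥ δ ≤ l2norm G * DB := by
    have h1 : G ⬝ᵥ δ = ∑ j ∈ B, G j * δ j := by
      rw [dotProduct]
      rw [← Finset.sum_subset (Finset.subset_univ B)]
      intro j _ hj
      rw [hG0 j hj, zero_mul]
    have hCS := Finset.sum_mul_sq_le_sq_mul_sq B (fun j => G j) (fun j => δ j)
    have h3 : (∑ j ∈ B, G j ^ 2) ≤ ∑ j, G j ^ 2 :=
      Finset.sum_le_sum_of_subset_of_nonneg (Finset.subset_univ B) (fun j _ _ => sq_nonneg _)
    rw [h1]
    calc (∑ j ∈ B, G j * δ j) ≤ |∑ j ∈ B, G j * δ j| := le_abs_self _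
      _ = Real.sqrt ((∑ j ∈ B, G j * δ j)^2) := by rw [Real.sqrt_sq_eq_abs]
      _ ≤ Real.sqrt ((∑ j ∈ B, G j ^ 2) * ∑ j ∈ B, δ j ^ 2) := Real.sqrt_le_sqrt hCS
      _ = Real.sqrt (∑ j ∈ B, G j ^ 2) * DB := by
          rw [Real.sqrt_mul (Finset.sum_nonneg fun j _ => sq_nonneg _)]
      _ ≤ l2norm G * DB :=
          mul_le_mul_of_nonneg_right (Real.sqrt_le_sqrt h3) hDBnn
  -- LHS
  have hnmu : (0:ℝ) ≤ (n:ℝ) * mu := by positivity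
  have F6 : (∑ i, (((Matrix.fromRows X (Real.sqrt (↑n * mu) • J)).mulVec βs -
      (Matrix.fromRows X (Real.sqrt (↑n * mu) • J)).mulVec b) i) ^ 2) = S1 + (n * mu) * S2 := by
    have h1 : (Matrix.fromRows X (Real.sqrt (↑n * mu) • J)).mulVec βs -
        (Matrix.fromRows X (Real.sqrt (↑n * mu) • J)).mulVec b
        = (Matrix.fromRows X (Real.sqrt (↑n * mu) • J)).mulVec δ := by
      rw [hδ, Matrix.mulVec_sub]
    rw [h1, Fintype.sum_sum_type]
    have h2 : ∀ i : Fin n, (Matrix.fromRows X (Real.sqrt (↑n * mu) • J)).mulVec δ (Sum.inl i)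
        = X.mulVec δ i := fun i => rfl
    have h3 : ∀ i : Fin m, (Matrix.fromRows X (Real.sqrt (↑n * mu) • J)).mulVec δ (Sum.inr i)
        = Real.sqrt (↑n * mu) * J.mulVec δ i := by
      intro i
      show ((Real.sqrt (↑n * mu) • J).mulVec δ) i = _
      rw [Matrix.smul_mulVec]
      rfl
    have hsl : (∑ i : Fin n,
        ((Matrix.fromRows X (Real.sqrt (↑n * mu) • J)).mulVec δ (Sum.inl i)) ^ 2) = S1 := by
      rw [hS1]
      exact Finset.sum_congr rfl fun i _ => by rw [h2 i]
    have hsr : (∑ i : Fin m,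
        ((Matrix.fromRows X (Real.sqrt (↑n * mu) • J)).mulVec δ (Sum.inr i)) ^ 2)
        = (↑n * mu) * S2 := by
      calc (∑ i : Fin m,
          ((Matrix.fromRows X (Real.sqrt (↑n * mu) • J)).mulVec δ (Sum.inr i)) ^ 2)
          = ∑ i : Fin m, (Real.sqrt (↑n * mu) * J.mulVec δ i) ^ 2 :=
            Finset.sum_congr rfl fun i _ => by rw [h3 i]
        _ = (↑n * mu) * S2 := by
            rw [hS2def, Finset.mul_sum]
            exact Finset.sum_congr rfl fun i _ => by rw [mul_pow, Real.sq_sqrt hnmu]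
    rw [hsl, hsr]
  -- F7
  have F7 : l2norm (restr B βs - restr B b) = DB := by
    rw [l2norm, hDB]
    congr 1
    have h1 : ∀ j, ((restr B βs - restr B b) j)^2 = if j ∈ B then δ j ^2 else 0 := by
      intro j
      simp only [Pi.sub_apply, restr, hδ]
      split <;> simp
    rw [Finset.sum_congr rfl (fun j _ => h1 j), Finset.sum_ite_mem, Finset.univ_inter]
  -- conclusion
  rw [F6, F7]
  have hdiv : (S1 + (↑n * mu) * S2) / n = S1/n + mu * S2 := by
    field_simp
  rw [hdiv]
  have hRHS : (2 * lam * Real.sqrt (A.card : ℝ) + 2 * mu * l2norm G) * DB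
      = 2 * lam * (Real.sqrt (A.card : ℝ) * DB) + 2 * mu * (l2norm G * DB) := by ring
  rw [hRHS]
  have hF3' : lam * l1norm βs - lam * l1norm b + lam * l1norm δ
      ≤ 2 * lam * (∑ j ∈ A, |δ j|) := by
    calc lam * l1norm βs - lam * l1norm b + lam * l1norm δ
        = lam * (l1norm βs - l1norm b + l1norm δ) := by ring
      _ ≤ lam * (2 * ∑ j ∈ A, |δ j|) := mul_le_mul_of_nonneg_left F3 hlam.le
      _ = 2 * lam * (∑ j ∈ A, |δ j|) := by ring
  have hF4' : 2 * lam * (∑ j ∈ A, |δ j|) ≤ 2 * lam * (Real.sqrt (A.card : ℝ) * DB) :=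
    mul_le_mul_of_nonneg_left F4 (by positivity)
  have hF5' : 2 * mu * (G ⬝ᵥ δ) ≤ 2 * mu * (l2norm G * DB) :=
    mul_le_mul_of_nonneg_left F5 (by positivity)
  linarith
end
end

section
/- Let X be an n×p real matrix with columns X_j, β* ∈ ℝ^p, ε ∈ ℝ^n, and Y = Xβ* + ε. Let J be an m×p real matrix, J̃ = J'J, λ > 0, μ > 0, Ψ^n = n^{-1}X'X, K_n = Ψ^n + μ·J̃, and let β̂ be any minimizer over β ∈ ℝ^p of ‖Y − Xβ‖_n² + λ|β|_1 + μ·β'J̃β. Then the Karush–Kuhn–Tucker conditions give |K_n(β̂ − β*) − n^{-1}X'ε + μ·J̃β*|_∞ ≤ λ/2, i.e., for every j ∈ {1,…,p}, |(K_n(β̂ − β*))_j − n^{-1}·X_j'ε + μ·(J̃β*)_j| ≤ λ/2. -/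
open MeasureTheory ProbabilityTheory Matrix Finset
open scoped Classical BigOperators ENNReal NNReal

noncomputable section

/-- the Karush–Kuhn–Tucker conditions for the quadratic-penalized
Lasso criterion. -/
theorem statement19
    (n p m : ℕ) (hn : 0 < n)
    (X : Matrix (Fin n) (Fin p) ℝ) (βs : Fin p → ℝ) (εv : Fin n → ℝ)
    (J : Matrix (Fin m) (Fin p) ℝ)
    (Jt : Matrix (Fin p) (Fin p) ℝ) (hJt : Jt = Jᵀ * J)
    (lam mu : ℝ) (hlam : 0 < lam) (hmu : 0 < mu)
    (Kn : Matrix (Fin p) (Fin p) ℝ) (hKn : Kn = (n : ℝ)⁻¹ • (Xᵀ * X) + mu • Jt)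
    (b : Fin p → ℝ)
    (hb : ∀ β, crit X (X.mulVec βs + εv) J lam mu b ≤
               crit X (X.mulVec βs + εv) J lam mu β) :
    ∀ j, |Kn.mulVec (b - βs) j - (∑ i, X i j * εv i) / n + mu * Jt.mulVec βs j| ≤
      lam / 2 := by
  intro j
  have hn' : (0:ℝ) < n := by exact_mod_cast hn
  set Y : Fin n → ℝ := X.mulVec βs + εv with hY
  set g : ℝ := Kn.mulVec (b - βs) j - (∑ i, X i j * εv i) / n + mu * Jt.mulVec βs j with hg
  set Q : ℝ := (∑ i, X i j ^ 2) / n + mu * (∑ i, J i j ^ 2) with hQdef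
  have hQ : 0 ≤ Q := by
    apply add_nonneg
    · exact div_nonneg (Finset.sum_nonneg fun i _ => sq_nonneg _) hn'.le
    · exact mul_nonneg hmu.le (Finset.sum_nonneg fun i _ => sq_nonneg _)
  have hJtb : ∀ v : Fin p → ℝ, Jt.mulVec v j = ∑ i, J i j * J.mulVec v i := by
    intro v
    rw [hJt, ← Matrix.mulVec_mulVec]
    simp [Matrix.mulVec, dotProduct, Matrix.transpose_apply]
  have hquad : ∀ v : Fin p → ℝ, v ⬝ᵥ (Jᵀ * J).mulVec v = ∑ i, (J.mulVec v i)^2 := by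
    intro v
    rw [← Matrix.mulVec_mulVec, Matrix.dotProduct_mulVec, Matrix.vecMul_transpose]
    simp [dotProduct, sq]
  have hG : g = -(∑ i, (Y i - X.mulVec b i) * X i j) / n + mu * Jt.mulVec b j := by
    have h1 : Kn.mulVec (b - βs) j
        = (∑ i, X i j * (X.mulVec b i - X.mulVec βs i)) / n
          + mu * (Jt.mulVec b j - Jt.mulVec βs j) := by
      rw [hKn, Matrix.add_mulVec, Matrix.smul_mulVec, Matrix.smul_mulVec]
      rw [← Matrix.mulVec_mulVec, Matrix.mulVec_sub, Matrix.mulVec_sub (A := Jt)]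
      simp only [Pi.add_apply, Pi.smul_apply, smul_eq_mul, Pi.sub_apply]
      rw [show (Xᵀ.mulVec (X.mulVec b - X.mulVec βs)) j
            = ∑ i, X i j * (X.mulVec b i - X.mulVec βs i) by
        simp [Matrix.mulVec, dotProduct, Matrix.transpose_apply]]
      ring
    have hsum : ∑ x, ((X.mulVec βs) x + εv x - (X.mulVec b) x) * X x j
        = (∑ i, X i j * εv i) - ∑ i, X i j * ((X.mulVec b) i - (X.mulVec βs) i) := by
      rw [← Finset.sum_sub_distrib]
      exact Finset.sum_congr rfl fun i _ => by ring
    rw [hg, h1, hY]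
    simp only [Pi.add_apply]
    rw [hsum, neg_sub, sub_div]
    ring
  have expand : ∀ t : ℝ,
      crit X Y J lam mu (fun k => b k + if k = j then t else 0)
        = crit X Y J lam mu b
          + 2 * (-(∑ i, (Y i - X.mulVec b i) * X i j) / n + mu * Jt.mulVec b j) * t
          + Q * t ^ 2 + lam * (|b j + t| - |b j|) := by
    intro t
    have hXv : ∀ i, X.mulVec (fun k => b k + if k = j then t else 0) i
        = X.mulVec b i + t * X i j := by
      intro i
      simp [Matrix.mulVec, dotProduct, mul_add, Finset.sum_add_distrib, mul_ite,
        mul_comm]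
    have hJv : ∀ i, J.mulVec (fun k => b k + if k = j then t else 0) i
        = J.mulVec b i + t * J i j := by
      intro i
      simp [Matrix.mulVec, dotProduct, mul_add, Finset.sum_add_distrib, mul_ite,
        mul_comm]
    have hl1 : l1norm (fun k => b k + if k = j then t else 0)
        = l1norm b + (|b j + t| - |b j|) := by
      unfold l1norm
      have : ∀ k, |b k + if k = j then t else 0|
          = |b k| + (if k = j then |b j + t| - |b j| else 0) := by
        intro k
        by_cases hk : k = j <;> simp [hk]
      simp only [this, Finset.sum_add_distrib, Finset.sum_ite_eq', Finset.mem_univ,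
        if_true]
    unfold crit normnSq
    rw [hquad, hquad, hl1, hJtb]
    have e1 : ∑ i, (Y - X.mulVec fun k => b k + if k = j then t else 0) i ^ 2
        = ∑ i, (Y i - X.mulVec b i)^2 - 2*t*∑ i, (Y i - X.mulVec b i)*X i j
          + t^2 * ∑ i, X i j^2 := by
      simp only [Pi.sub_apply, hXv]
      rw [Finset.mul_sum, Finset.mul_sum, ← Finset.sum_sub_distrib, ← Finset.sum_add_distrib]
      exact Finset.sum_congr rfl fun i _ => by ring
    have e2 : ∑ i, (J.mulVec fun k => b k + if k = j then t else 0) i ^ 2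
        = ∑ i, (J.mulVec b i)^2 + 2*t*∑ i, J i j * J.mulVec b i
          + t^2 * ∑ i, J i j^2 := by
      simp only [hJv]
      rw [Finset.mul_sum, Finset.mul_sum, ← Finset.sum_add_distrib, ← Finset.sum_add_distrib]
      exact Finset.sum_congr rfl fun i _ => by ring
    rw [e1, e2]
    have e3 : ∑ i, (Y - X.mulVec b) i ^ 2 = ∑ i, (Y i - X.mulVec b i)^2 := rfl
    rw [e3, hQdef]
    field_simp
    ring
  have key : ∀ t : ℝ, 0 ≤ 2*g*t + Q*t^2 + lam*|t| := by
    intro t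
    have h := hb (fun k => b k + if k = j then t else 0)
    rw [expand t, ← hG] at h
    have habs : |b j + t| - |b j| ≤ |t| := by
      have := abs_add_le (b j) t
      linarith
    nlinarith [abs_nonneg t]
  have main : ∀ ε : ℝ, 0 < ε → |g| ≤ lam/2 + ε := by
    intro ε hε
    set s : ℝ := 2*ε/(Q+1) with hs
    have hs0 : 0 < s := by positivity
    have hQs : Q * s ≤ 2*ε := by
      rw [hs, mul_comm, div_mul_eq_mul_div, div_le_iff₀ (by positivity : (0:ℝ) < Q+1)]
      nlinarith
    rcases le_or_gt 0 g with hg0 | hg0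
    · have h := key (-s)
      rw [abs_neg, abs_of_pos hs0] at h
      have hgle : 2*g ≤ Q*s + lam := by
        have hmul : (2*g)*s ≤ (Q*s + lam)*s := by nlinarith
        exact le_of_mul_le_mul_right hmul hs0
      rw [abs_of_nonneg hg0]; clear_value g Q s; linarith
    · have h := key s
      rw [abs_of_pos hs0] at h
      have hgle : 2*(-g) ≤ Q*s + lam := by
        have hmul : (2*(-g))*s ≤ (Q*s + lam)*s := by nlinarith
        exact le_of_mul_le_mul_right hmul hs0
      rw [abs_of_neg hg0]; clear_value g Q s; linarith
  exact le_of_forall_pos_le_add main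
end
end
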